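/- arXiv:1305.4468 — 2 statements merged into one kernel-verified Lean document; each statement's English description precedes it below -/
import Mathlib

section
/- Suppose ψ⁰(t) = Σ(t)x⁰(t) + β⁰(t) for all t ∈ [0,T], where x⁰ solves ẋ⁰ = A(t)x⁰ + b(t) + B(t)u⁰(t) and ψ⁰ solves ψ̇⁰ = −A*(t)ψ⁰ − H(t)x⁰ − F(t) − E*(t)u⁰(t), ψ⁰(T) = M x⁰(T) + N, with Σ and β⁰ differentiable. If this representation holds for a family of controls whose states x⁰(t) span ℝⁿ at each t, then Σ and β⁰ satisfy: Σ̇(t) + A*(t)Σ(t) + Σ(t)A(t) + H(t) = 0 with Σ(T) = M, and β̇⁰(t) + A*(t)β⁰(t) + Σ(t)b(t) + F(t) + (Σ(t)B(t) + E*(t))u⁰(t) = 0 with β⁰(T) = N. -/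
open MeasureTheory Set Matrix

/-- If an affine map `v ↦ P v + q` vanishes on a family whose affine span is everything,
then `P = 0` and `q = 0`. -/
lemma affine_zero_of_span {n : ℕ} {ι : Type*} (P : Matrix (Fin n) (Fin n) ℝ)
    (q : Fin n → ℝ) (y : ι → Fin n → ℝ)
    (hspan : affineSpan ℝ (Set.range y) = ⊤)
    (h : ∀ i, P *ᵥ y i + q = 0) : P = 0 ∧ q = 0 := by
  obtain ⟨p, hp⟩ := AffineSubspace.nonempty_of_affineSpan_eq_top ℝ (Fin n → ℝ) (Fin n → ℝ) hspan
  obtain ⟨i0, rfl⟩ := hp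
  have hv : vectorSpan ℝ (Set.range y) = ⊤ :=
    AffineSubspace.vectorSpan_eq_top_of_affineSpan_eq_top ℝ (Fin n → ℝ) (Fin n → ℝ) hspan
  have hker : ∀ v : Fin n → ℝ, P *ᵥ v = 0 := by
    intro v
    have hv' : v ∈ vectorSpan ℝ (Set.range y) := by rw [hv]; trivial
    rw [vectorSpan, Submodule.mem_span] at hv'
    have : v ∈ LinearMap.ker P.mulVecLin := by
      apply hv' (LinearMap.ker P.mulVecLin)
      rintro w ⟨a, ⟨i, rfl⟩, b, ⟨j, rfl⟩, rfl⟩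
      have hi := h i; have hj := h j
      simp only [LinearMap.mem_ker, SetLike.mem_coe, vsub_eq_sub, mulVecLin_apply,
        mulVec_sub]
      have : P *ᵥ y i = P *ᵥ y j := by
        have := hi.trans hj.symm
        exact add_right_cancel this
      rw [this, sub_self]
    simpa [mulVecLin_apply] using this
  have hP : P = 0 := by
    ext i j
    have := congrFun (hker (Pi.single j 1)) i
    simpa using this
  refine ⟨hP, ?_⟩
  have := h i0
  rw [hker] at this
  simpa using this

/-- Riccati-type equations from the affine representation `ψ = Σ x + β` of the
adjoint. If the representation `ψᵢ(t) = Σ(t)xᵢ(t) + β(t)` holds for a family of trajectories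
(driven by the control `u⁰`) whose states affinely span `ℝⁿ` at each `t`, with `Σ, β`
differentiable, then `Σ̇ + A*Σ + ΣA + H = 0, Σ(T) = M` and
`β̇ + A*β + Σb + F + (ΣB + E*)u⁰ = 0, β(T) = N`. -/
theorem stmt12 (n dd : ℕ) (T : ℝ) (hT : 0 < T)
    (A Hm : ℝ → Matrix (Fin n) (Fin n) ℝ) (B : ℝ → Matrix (Fin n) (Fin dd) ℝ)
    (E : ℝ → Matrix (Fin dd) (Fin n) ℝ)
    (b F : ℝ → Fin n → ℝ)
    (M : Matrix (Fin n) (Fin n) ℝ) (N : Fin n → ℝ)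
    (hHsymm : ∀ t, (Hm t).IsSymm) (hHpos : ∀ t, (Hm t).PosSemidef)
    (hMsymm : M.IsSymm) (hMpos : M.PosSemidef)
    (u0 : ℝ → Fin dd → ℝ)
    -- the family of trajectories and adjoints, indexed by `ι`
    {ι : Type*} (x ψ : ι → ℝ → Fin n → ℝ)
    (hx : ∀ i, ∀ t ∈ Icc (0:ℝ) T,
      HasDerivAt (x i) (A t *ᵥ x i t + b t + B t *ᵥ u0 t) t)
    (hψ : ∀ i, ∀ t ∈ Icc (0:ℝ) T,
      HasDerivAt (ψ i) (-((A t)ᵀ *ᵥ ψ i t + Hm t *ᵥ x i t + F t + (E t)ᵀ *ᵥ u0 t)) t)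
    (hψT : ∀ i, ψ i T = M *ᵥ x i T + N)
    -- the affine representation `ψᵢ(t) = Σ(t) xᵢ(t) + β(t)` with `Σ, β` differentiable
    (S S' : ℝ → Matrix (Fin n) (Fin n) ℝ) (β β' : ℝ → Fin n → ℝ)
    (hS : ∀ t ∈ Icc (0:ℝ) T, ∀ v : Fin n → ℝ, HasDerivAt (fun τ => S τ *ᵥ v) (S' t *ᵥ v) t)
    (hβ : ∀ t ∈ Icc (0:ℝ) T, HasDerivAt β (β' t) t)
    (hrep : ∀ i, ∀ t ∈ Icc (0:ℝ) T, ψ i t = S t *ᵥ x i t + β t)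
    -- the states affinely span `ℝⁿ` at each time
    (hspan : ∀ t ∈ Icc (0:ℝ) T,
      affineSpan ℝ (Set.range fun i => x i t) = ⊤) :
    (∀ t ∈ Icc (0:ℝ) T, S' t + (A t)ᵀ * S t + S t * A t + Hm t = 0) ∧
    S T = M ∧
    (∀ t ∈ Icc (0:ℝ) T,
      β' t + (A t)ᵀ *ᵥ β t + S t *ᵥ b t + F t + (S t * B t + (E t)ᵀ) *ᵥ u0 t = 0) ∧
    β T = N := by
  have hTmem : T ∈ Icc (0:ℝ) T := ⟨le_of_lt hT, le_refl T⟩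
  -- Terminal conditions
  have hterm : S T - M = 0 ∧ β T - N = 0 := by
    apply affine_zero_of_span (S T - M) (β T - N) (fun i => x i T) (hspan T hTmem)
    intro i
    have h1 := hψT i
    have h2 := hrep i T hTmem
    rw [h2] at h1
    rw [Matrix.sub_mulVec]
    linear_combination h1
  -- Interior (and endpoint) differential equations
  have hmain : ∀ t ∈ Icc (0:ℝ) T,
      (S' t + (A t)ᵀ * S t + S t * A t + Hm t) = 0 ∧
      (β' t + (A t)ᵀ *ᵥ β t + S t *ᵥ b t + F t + (S t * B t + (E t)ᵀ) *ᵥ u0 t) = 0 := by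
    intro t ht
    apply affine_zero_of_span _ _ (fun i => x i t) (hspan t ht)
    intro i
    set x' : Fin n → ℝ := A t *ᵥ x i t + b t + B t *ᵥ u0 t with hx'
    -- derivative of τ ↦ S τ *ᵥ x i τ
    have hprod : HasDerivAt (fun τ => S τ *ᵥ x i τ) (S' t *ᵥ x i t + S t *ᵥ x') t := by
      rw [hasDerivAt_pi]
      intro j
      have hform : ∀ τ, (S τ *ᵥ x i τ) j = ∑ k, S τ j k * x i τ k := by
        intro τ; simp [Matrix.mulVec, dotProduct]
      have hsum : HasDerivAt (fun τ => ∑ k, S τ j k * x i τ k)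
          (∑ k, (S' t j k * x i t k + S t j k * x' k)) t := by
        apply HasDerivAt.fun_sum
        intro k _
        have hSe : HasDerivAt (fun τ => S τ j k) (S' t j k) t := by
          have := (hasDerivAt_pi.1 (hS t ht (Pi.single k 1))) j
          simpa using this
        have hxe : HasDerivAt (fun τ => x i τ k) (x' k) t :=
          (hasDerivAt_pi.1 (hx i t ht)) k
        simpa using hSe.fun_mul hxe
      have : HasDerivAt (fun τ => (S τ *ᵥ x i τ) j)
          (∑ k, (S' t j k * x i t k + S t j k * x' k)) t := by
        simp only [hform]; exact hsum
      refine HasDerivAt.congr_deriv this ?_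
      simp [Matrix.mulVec, dotProduct, Finset.sum_add_distrib]
    have hg : HasDerivAt (fun τ => S τ *ᵥ x i τ + β τ)
        (S' t *ᵥ x i t + S t *ᵥ x' + β' t) t := hprod.add (hβ t ht)
    -- uniqueness of derivative within Icc
    have hud : UniqueDiffWithinAt ℝ (Icc (0:ℝ) T) t := (uniqueDiffOn_Icc hT) t ht
    have hψw : HasDerivWithinAt (fun τ => S τ *ᵥ x i τ + β τ)
        (-((A t)ᵀ *ᵥ ψ i t + Hm t *ᵥ x i t + F t + (E t)ᵀ *ᵥ u0 t)) (Icc (0:ℝ) T) t := by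
      apply ((hψ i t ht).hasDerivWithinAt).congr
      · intro y hy; exact (hrep i y hy).symm
      · exact (hrep i t ht).symm
    have hgw := hg.hasDerivWithinAt (s := Icc (0:ℝ) T)
    have key : -((A t)ᵀ *ᵥ ψ i t + Hm t *ᵥ x i t + F t + (E t)ᵀ *ᵥ u0 t)
        = S' t *ᵥ x i t + S t *ᵥ x' + β' t :=
      (hψw.derivWithin hud).symm.trans (hgw.derivWithin hud)
    rw [hrep i t ht] at key
    simp only [hx', Matrix.add_mulVec, Matrix.mulVec_add, ← Matrix.mulVec_mulVec] at key ⊢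
    linear_combination -key
  exact ⟨fun t ht => (hmain t ht).1, sub_eq_zero.1 hterm.1,
    fun t ht => (hmain t ht).2, sub_eq_zero.1 hterm.2⟩
end

section
/- Discrete-time sufficiency: with the discrete Hamiltonian H(k,x,ψ,u) := ⟨f(k,x,u), ψ⟩ + ℓ(k,x,u), suppose (x,u) ↦ H(k,x,ψ⁰(k+1),u) is convex for each k, φ is convex, (x⁰,u⁰,ψ⁰) satisfy the state recursion x⁰(k+1) = f(k,x⁰(k),u⁰(k)), the adjoint recursion ψ⁰(k) = H_x(k,x⁰(k),ψ⁰(k+1),u⁰(k)) with ψ⁰(T) = φ_x(x⁰(T)), and ⟨H_u(k,x⁰(k),ψ⁰(k+1),u⁰(k)), v − u⁰(k)⟩ ≥ 0 for all v ∈ A and each k. Then u⁰ minimizes J(u) := Σ_{k=0}^{T−1} ℓ(k,x(k),u(k)) + φ(x(T)) over all controls u : {0,…,T−1} → A (with states from the recursion and fixed x(0) = x₀). -/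
open RealInnerProductSpace

open Filter Set Topology

lemma dir_deriv {E : Type*} [NormedAddCommGroup E] [InnerProductSpace ℝ E] [CompleteSpace E]
    {g : E → ℝ} {G p : E} (hg : HasGradientAt g G p) (v : E) :
    Tendsto (fun t : ℝ => (g (p + t • v) - g p) / t) (𝓝[>] (0:ℝ)) (𝓝 (⟪G, v⟫)) := by
  have hline : HasDerivAt (fun t : ℝ => p + t • v) v (0:ℝ) := by
    simpa using ((hasDerivAt_id (0:ℝ)).smul_const v).const_add p
  have hF : HasFDerivAt g (InnerProductSpace.toDual ℝ E G) p :=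
    (hasGradientAt_iff_hasFDerivAt).1 hg
  have hF' : HasFDerivAt g (InnerProductSpace.toDual ℝ E G) ((fun t : ℝ => p + t • v) 0) := by
    simpa using hF
  have hcomp : HasDerivAt (fun t : ℝ => g (p + t • v)) (⟪G, v⟫) (0:ℝ) := by
    simpa [InnerProductSpace.toDual_apply_apply, Function.comp_def] using hF'.comp_hasDerivAt (0:ℝ) hline
  rw [hasDerivAt_iff_tendsto_slope] at hcomp
  have heq : (fun t : ℝ => (g (p + t • v) - g p) / t) =
      slope (fun t : ℝ => g (p + t • v)) 0 := by
    funext t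
    simp [slope_def_field]
  rw [heq]
  exact hcomp.mono_left (nhdsWithin_mono _ (fun t ht => ne_of_gt ht))

lemma conv_grad_le {E : Type*} [NormedAddCommGroup E] [InnerProductSpace ℝ E] [CompleteSpace E]
    {g : E → ℝ} (hconv : ConvexOn ℝ Set.univ g) {G p : E} (hg : HasGradientAt g G p) (y : E) :
    ⟪G, y - p⟫ ≤ g y - g p := by
  refine le_of_tendsto (dir_deriv hg (y - p)) ?_
  filter_upwards [Ioo_mem_nhdsGT (one_pos : (0:ℝ) < 1)] with t ht
  have h := hconv.2 (Set.mem_univ p) (Set.mem_univ y) (by linarith [ht.2] : (0:ℝ) ≤ 1 - t)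
    (le_of_lt ht.1) (by ring)
  have hpt : p + t • (y - p) = (1 - t) • p + t • y := by module
  rw [div_le_iff₀ ht.1, hpt]
  simp only [smul_eq_mul] at h
  nlinarith [h]

lemma conv_grad_le2 {E F : Type*} [NormedAddCommGroup E] [InnerProductSpace ℝ E] [CompleteSpace E]
    [NormedAddCommGroup F] [InnerProductSpace ℝ F] [CompleteSpace F] {A : Set F}
    {H : E → F → ℝ}
    (hconv : ConvexOn ℝ (Set.univ ×ˢ A) (fun p : E × F => H p.1 p.2))
    {x0 : E} {u0 : F} (hu0 : u0 ∈ A) {gx : E} {gu : F}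
    (hgx : HasGradientAt (fun z => H z u0) gx x0)
    (hgu : HasGradientAt (fun v => H x0 v) gu u0)
    {x : E} {u : F} (hu : u ∈ A) :
    ⟪gx, x - x0⟫ + ⟪gu, u - u0⟫ ≤ H x u - H x0 u0 := by
  have h1 := dir_deriv hgu (u - u0)
  have h2 := dir_deriv hgx (-(x - x0))
  have hdouble : Tendsto (fun t : ℝ => 2 * t) (𝓝[>] (0:ℝ)) (𝓝[>] (0:ℝ)) := by
    apply tendsto_nhdsWithin_of_tendsto_nhds_of_eventually_within
    · simpa using ((tendsto_id (x := 𝓝 (0:ℝ))).const_mul 2).mono_left nhdsWithin_le_nhds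
    · filter_upwards [self_mem_nhdsWithin] with t ht
      exact mul_pos two_pos (Set.mem_Ioi.1 ht)
  have h3 := h1.sub (h2.comp hdouble)
  have hlim : ⟪gu, u - u0⟫ - ⟪gx, -(x - x0)⟫ = ⟪gx, x - x0⟫ + ⟪gu, u - u0⟫ := by
    rw [inner_neg_right]; ring
  rw [hlim] at h3
  refine le_of_tendsto h3 ?_
  filter_upwards [Ioo_mem_nhdsGT
    (by norm_num : (0:ℝ) < 1/2)] with t ht
  simp only [Function.comp]
  have ht1 : (0:ℝ) < t := ht.1
  have ht2 : t < 1/2 := ht.2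
  have h2t : (0:ℝ) < 2 * t := by linarith
  have hp0 : ((x0, u0) : E × F) ∈ Set.univ ×ˢ A := ⟨Set.mem_univ _, hu0⟩
  have hp : ((x, u) : E × F) ∈ Set.univ ×ˢ A := ⟨Set.mem_univ _, hu⟩
  -- (a) convexity along the segment from (x0,u0) to (x,u)
  have hA := hconv.2 hp0 hp (by linarith : (0:ℝ) ≤ 1 - 2*t) (le_of_lt h2t) (by ring)
  have ea : (1 - 2*t) • ((x0, u0) : E × F) + (2*t) • (x, u)
      = (x0 + (2*t) • (x - x0), u0 + (2*t) • (u - u0)) := by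
    simp only [Prod.smul_mk, Prod.mk_add_mk, Prod.mk.injEq]
    constructor <;> module
  rw [ea] at hA
  -- hA : H (x0 + 2t Δx) (u0 + 2t Δu) ≤ (1-2t) * H x0 u0 + 2t * H x u
  -- (b) midpoint inequality
  have haS : ((x0 + (2*t) • (x - x0), u0 + (2*t) • (u - u0)) : E × F) ∈ Set.univ ×ˢ A := by
    rw [← ea]
    exact hconv.1 hp0 hp (by linarith) (le_of_lt h2t) (by ring)
  have hbS : ((x0 + (2*t) • (-(x - x0)), u0) : E × F) ∈ Set.univ ×ˢ A := ⟨Set.mem_univ _, hu0⟩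
  have hB := hconv.2 haS hbS (by norm_num : (0:ℝ) ≤ 1/2) (by norm_num : (0:ℝ) ≤ 1/2)
    (by norm_num)
  have eb : (1/2 : ℝ) • ((x0 + (2*t) • (x - x0), u0 + (2*t) • (u - u0)) : E × F)
      + (1/2 : ℝ) • (x0 + (2*t) • (-(x - x0)), u0)
      = (x0, u0 + t • (u - u0)) := by
    simp only [Prod.smul_mk, Prod.mk_add_mk, Prod.mk.injEq]
    constructor <;> module
  rw [eb] at hB
  -- hB : H x0 (u0 + t Δu) ≤ 1/2 * H (x0+2tΔx) (u0+2tΔu) + 1/2 * H (x0-2tΔx) u0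
  simp only [smul_eq_mul] at hA hB
  rw [div_sub_div _ _ (ne_of_gt ht1) (ne_of_gt h2t), div_le_iff₀ (by positivity)]
  nlinarith [hA, hB, mul_pos ht1 h2t]
/-- Discrete-time sufficiency of the Pontryagin conditions under convexity.
With `H(k,x,ψ,u) = ⟨f(k,x,u), ψ⟩ + ℓ(k,x,u)`, if `(x,u) ↦ H(k,x,ψ⁰(k+1),u)` is convex,
`φ` is convex, `(x⁰,u⁰,ψ⁰)` satisfy the state recursion, the adjoint recursion
`ψ⁰(k) = H_x(k,x⁰(k),ψ⁰(k+1),u⁰(k))`, `ψ⁰(T) = φ_x(x⁰(T))`, and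
`⟨H_u(k,x⁰(k),ψ⁰(k+1),u⁰(k)), v − u⁰(k)⟩ ≥ 0` for all `v ∈ A`, then `u⁰` minimizes
`J(u) = Σ_{k<T} ℓ(k,x(k),u(k)) + φ(x(T))` over controls valued in `A`. -/
theorem stmt14 (n d : ℕ) (T : ℕ)
    (A : Set (EuclideanSpace ℝ (Fin d))) (hAc : IsClosed A) (hAconv : Convex ℝ A)
    (x₀ : EuclideanSpace ℝ (Fin n))
    (f : ℕ → EuclideanSpace ℝ (Fin n) → EuclideanSpace ℝ (Fin d) → EuclideanSpace ℝ (Fin n))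
    (ℓ : ℕ → EuclideanSpace ℝ (Fin n) → EuclideanSpace ℝ (Fin d) → ℝ)
    (φ : EuclideanSpace ℝ (Fin n) → ℝ)
    (u0 : ℕ → EuclideanSpace ℝ (Fin d)) (hu0A : ∀ k < T, u0 k ∈ A)
    (x0 ψ0 : ℕ → EuclideanSpace ℝ (Fin n))
    -- state recursion for the candidate optimal pair
    (hx0init : x0 0 = x₀)
    (hx0 : ∀ k < T, x0 (k + 1) = f k (x0 k) (u0 k))
    -- convexity of the Hamiltonian `(x,u) ↦ H(k,x,ψ⁰(k+1),u)` on `ℝⁿ × A`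
    (hconvH : ∀ k < T, ConvexOn ℝ (Set.univ ×ˢ A)
      (fun p : EuclideanSpace ℝ (Fin n) × EuclideanSpace ℝ (Fin d) =>
        ⟪f k p.1 p.2, ψ0 (k + 1)⟫ + ℓ k p.1 p.2))
    -- convexity of the terminal cost
    (hconvφ : ConvexOn ℝ Set.univ φ)
    -- adjoint recursion: `ψ⁰(k)` is the gradient in `x` of `H(k,·,ψ⁰(k+1),u⁰(k))` at `x⁰(k)`
    (hadj : ∀ k < T, HasGradientAt
      (fun z => ⟪f k z (u0 k), ψ0 (k + 1)⟫ + ℓ k z (u0 k)) (ψ0 k) (x0 k))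
    -- transversality: `ψ⁰(T) = φ_x(x⁰(T))`
    (hterm : HasGradientAt φ (ψ0 T) (x0 T))
    -- variational inequality in `u`
    (Hu : ℕ → EuclideanSpace ℝ (Fin d))
    (hHu : ∀ k < T, HasGradientAt
      (fun v => ⟪f k (x0 k) v, ψ0 (k + 1)⟫ + ℓ k (x0 k) v) (Hu k) (u0 k))
    (hineq : ∀ k < T, ∀ v ∈ A, 0 ≤ ⟪Hu k, v - u0 k⟫) :
    ∀ (u : ℕ → EuclideanSpace ℝ (Fin d)) (x : ℕ → EuclideanSpace ℝ (Fin n)),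
      (∀ k < T, u k ∈ A) → x 0 = x₀ → (∀ k < T, x (k + 1) = f k (x k) (u k)) →
      (∑ k ∈ Finset.range T, ℓ k (x0 k) (u0 k)) + φ (x0 T) ≤
        (∑ k ∈ Finset.range T, ℓ k (x k) (u k)) + φ (x T) := by
  intro u x huA hxinit hx
  set e : ℕ → ℝ := fun j => ⟪x j - x0 j, ψ0 j⟫ with he
  have hstep : ∀ k ∈ Finset.range T,
      ℓ k (x0 k) (u0 k) - ℓ k (x k) (u k) ≤ e (k + 1) - e k := by
    intro k hk
    rw [Finset.mem_range] at hk
    have hkey := conv_grad_le2 (H := fun z v => ⟪f k z v, ψ0 (k + 1)⟫ + ℓ k z v)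
      (x := x k) (hconvH k hk) (hu0A k hk) (hadj k hk) (hHu k hk) (huA k hk)
    beta_reduce at hkey
    rw [← hx k hk, ← hx0 k hk] at hkey
    have h0 := hineq k hk (u k) (huA k hk)
    have comm1 : ⟪ψ0 k, x k - x0 k⟫ = ⟪x k - x0 k, ψ0 k⟫ := real_inner_comm _ _
    have hsub : ⟪x (k + 1) - x0 (k + 1), ψ0 (k + 1)⟫
        = ⟪x (k + 1), ψ0 (k + 1)⟫ - ⟪x0 (k + 1), ψ0 (k + 1)⟫ := inner_sub_left _ _ _
    simp only [he]
    linarith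
  have hsum := Finset.sum_le_sum hstep
  rw [Finset.sum_range_sub (fun j => e j), Finset.sum_sub_distrib] at hsum
  have he0 : e 0 = 0 := by simp [he, hxinit, hx0init]
  have hφ := conv_grad_le hconvφ hterm (x T)
  have heT : e T = ⟪ψ0 T, x T - x0 T⟫ := real_inner_comm _ _
  linarith
end
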